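/- Let ρ, p : ℝ × [−π,π] → ℝ and u : ℝ × [−π,π] → ℝ² be smooth and 2π-periodic in x₁, satisfying ∇·u = 0, u + ∇p = −(0,ρ), u₂(x₁,±π) = 0, and the stationarity condition u·∇ρ = 0. Then u ≡ 0 and ∂_{x₁}ρ ≡ 0; that is, every smooth stationary solution of the IPM equation on the strip S = T×[−π,π] is a horizontally stratified state ρ = g(x₂). -/

import Mathlib

open Real MeasureTheory Filter Topology
open scoped ENNReal NNReal

noncomputable section

/-- Points of the plane; functions on the strip `S = T × [-π,π]` are identified with functions on
`ℝ × [-π,π]` that are `2π`-periodic in `x₁` (smooth functions on the closed strip are viewed as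
restrictions of smooth functions on `ℝ²`). -/
abbrev Pt : Type := ℝ × ℝ

/-- `2π`-periodicity in the first variable. -/
def Per1 (f : Pt → ℝ) : Prop := ∀ x : Pt, f (x.1 + 2 * π, x.2) = f x

/-- Partial derivative in the first space variable. -/
def pd1 (f : Pt → ℝ) (x : Pt) : ℝ := deriv (fun y => f (y, x.2)) x.1

/-- Partial derivative in the second space variable. -/
def pd2 (f : Pt → ℝ) (x : Pt) : ℝ := deriv (fun y => f (x.1, y)) x.2

/-- The fundamental domain `[-π,π] × [-π,π]` of the strip `S`. -/
def QS : Set Pt := Set.Icc (-π) π ×ˢ Set.Icc (-π) π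

/-- The Dirichlet eigenfunctions in the vertical variable:
`b_q(y) = cos(qy/2)` for `q` odd and `b_q(y) = sin(qy/2)` for `q` even. -/
def bq (q : ℕ) (y : ℝ) : ℝ :=
  if q % 2 = 1 then Real.cos (q * y / 2) else Real.sin (q * y / 2)

/-- Eigenfunction coefficients on the strip:
`c_{p,q}(f) = (2π²)⁻¹ ∫_S f(x) e^{-ipx₁} b_q(x₂) dx`. -/
def scoef (f : Pt → ℝ) (pq : ℤ × ℕ) : ℂ :=
  ((2 * π ^ 2 : ℝ))⁻¹ *
    ∫ x in QS, (f x : ℂ) * Complex.exp (-Complex.I * (((pq.1 : ℝ) * x.1 : ℝ) : ℂ)) *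
      ((bq pq.2 x.2 : ℝ) : ℂ)

/-- Homogeneous Sobolev norm on the strip (valued in `ℝ≥0∞`):
`‖f‖_{Ḣ^s(S)}² = 2π² Σ_{p∈ℤ, q≥1} (p² + q²/4)^s |c_{p,q}(f)|²`. -/
def sobS (s : ℝ) (f : Pt → ℝ) : ℝ≥0∞ :=
  (ENNReal.ofReal (2 * π ^ 2) *
    ∑' pq : ℤ × ℕ, (if 1 ≤ pq.2 then
      ENNReal.ofReal (((pq.1 : ℝ) ^ 2 + (pq.2 : ℝ) ^ 2 / 4) ^ s) * (‖scoef f pq‖₊ : ℝ≥0∞) ^ 2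
      else 0)) ^ (1/2 : ℝ)

/-- Inhomogeneous Sobolev norm on the strip: `‖f‖_{H^s(S)}² = ‖f‖_{Ḣ^s(S)}² + ‖f‖_{L²(S)}²`. -/
def hsobS (s : ℝ) (f : Pt → ℝ) : ℝ≥0∞ :=
  (sobS s f ^ 2 + ∫⁻ x in QS, ENNReal.ofReal (f x ^ 2)) ^ (1/2 : ℝ)

/-- A global smooth solution of the IPM system on the strip `S = T × [-π,π]`:
`∂_t ρ + u·∇ρ = 0`, `∇·u = 0`, `u + ∇p = -(0,ρ)` on `S` for all `t ≥ 0`, with `ρ, u, p` smooth,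
`2π`-periodic in `x₁`, and the no-flow condition `u₂ = 0` on `x₂ = ±π`. -/
structure IsIPMSolS (ρ : Pt → ℝ → ℝ) (u : Pt → ℝ → Pt) (p : Pt → ℝ → ℝ) : Prop where
  smooth_rho : ContDiff ℝ (⊤ : ℕ∞) fun q : Pt × ℝ => ρ q.1 q.2
  smooth_u : ContDiff ℝ (⊤ : ℕ∞) fun q : Pt × ℝ => u q.1 q.2
  smooth_p : ContDiff ℝ (⊤ : ℕ∞) fun q : Pt × ℝ => p q.1 q.2
  per_rho : ∀ t : ℝ, 0 ≤ t → Per1 fun x => ρ x t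
  per_u1 : ∀ t : ℝ, 0 ≤ t → Per1 fun x => (u x t).1
  per_u2 : ∀ t : ℝ, 0 ≤ t → Per1 fun x => (u x t).2
  per_p : ∀ t : ℝ, 0 ≤ t → Per1 fun x => p x t
  transport : ∀ x : Pt, x.2 ∈ Set.Icc (-π) π → ∀ t : ℝ, 0 ≤ t →
    deriv (fun τ => ρ x τ) t
      + (u x t).1 * pd1 (fun y => ρ y t) x + (u x t).2 * pd2 (fun y => ρ y t) x = 0
  incomp : ∀ x : Pt, x.2 ∈ Set.Icc (-π) π → ∀ t : ℝ, 0 ≤ t →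
    pd1 (fun y => (u y t).1) x + pd2 (fun y => (u y t).2) x = 0
  darcy1 : ∀ x : Pt, x.2 ∈ Set.Icc (-π) π → ∀ t : ℝ, 0 ≤ t →
    (u x t).1 + pd1 (fun y => p y t) x = 0
  darcy2 : ∀ x : Pt, x.2 ∈ Set.Icc (-π) π → ∀ t : ℝ, 0 ≤ t →
    (u x t).2 + pd2 (fun y => p y t) x = -ρ x t
  noflow_top : ∀ x₁ : ℝ, ∀ t : ℝ, 0 ≤ t → (u (x₁, π) t).2 = 0
  noflow_bot : ∀ x₁ : ℝ, ∀ t : ℝ, 0 ≤ t → (u (x₁, -π) t).2 = 0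

section IPMAux

lemma hasDerivAt_pd1 {f : Pt → ℝ} (hf : ContDiff ℝ (⊤ : ℕ∞) f) (x : Pt) :
    HasDerivAt (fun y => f (y, x.2)) (pd1 f x) x.1 := by
  have h : DifferentiableAt ℝ (fun y : ℝ => f (y, x.2)) x.1 :=
    ((hf.differentiable (by simp)) _).comp x.1
      (DifferentiableAt.prodMk differentiableAt_id (differentiableAt_const _))
  exact h.hasDerivAt

lemma hasDerivAt_pd2 {f : Pt → ℝ} (hf : ContDiff ℝ (⊤ : ℕ∞) f) (x : Pt) :
    HasDerivAt (fun y => f (x.1, y)) (pd2 f x) x.2 := by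
  have h : DifferentiableAt ℝ (fun y : ℝ => f (x.1, y)) x.2 :=
    ((hf.differentiable (by simp)) _).comp x.2
      (DifferentiableAt.prodMk (differentiableAt_const _) differentiableAt_id)
  exact h.hasDerivAt

lemma continuous_pd1 {f : Pt → ℝ} (hf : ContDiff ℝ (⊤ : ℕ∞) f) : Continuous (pd1 f) := by
  have hrep : pd1 f = fun x => fderiv ℝ f x (1, 0) := by
    funext x
    have h1 : HasDerivAt (fun y : ℝ => (y, x.2) : ℝ → Pt) ((1 : ℝ), (0 : ℝ)) x.1 :=
      HasDerivAt.prodMk (hasDerivAt_id x.1) (hasDerivAt_const _ _)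
    have h2 : HasFDerivAt f (fderiv ℝ f x) (x.1, x.2) := by
      rw [Prod.mk.eta]; exact ((hf.differentiable (by simp)) x).hasFDerivAt
    exact (h2.comp_hasDerivAt x.1 h1).deriv
  rw [hrep]
  exact (hf.continuous_fderiv (by simp)).clm_apply continuous_const

lemma continuous_pd2 {f : Pt → ℝ} (hf : ContDiff ℝ (⊤ : ℕ∞) f) : Continuous (pd2 f) := by
  have hrep : pd2 f = fun x => fderiv ℝ f x (0, 1) := by
    funext x
    have h1 : HasDerivAt (fun y : ℝ => (x.1, y) : ℝ → Pt) ((0 : ℝ), (1 : ℝ)) x.2 :=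
      HasDerivAt.prodMk (hasDerivAt_const _ _) (hasDerivAt_id x.2)
    have h2 : HasFDerivAt f (fderiv ℝ f x) (x.1, x.2) := by
      rw [Prod.mk.eta]; exact ((hf.differentiable (by simp)) x).hasFDerivAt
    exact (h2.comp_hasDerivAt x.2 h1).deriv
  rw [hrep]
  exact (hf.continuous_fderiv (by simp)).clm_apply continuous_const

lemma Per1.shift_int {f : Pt → ℝ} (hf : Per1 f) (x : Pt) (n : ℤ) :
    f (x.1 - n * (2 * π), x.2) = f x := by
  have hper : Function.Periodic (fun y : ℝ => f (y, x.2)) (2 * π) := fun y => hf (y, x.2)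
  exact hper.sub_int_mul_eq n

lemma integral_pd1_slice {f : Pt → ℝ} (hf : ContDiff ℝ (⊤ : ℕ∞) f) (y : ℝ) :
    ∫ b in Set.Icc (-π) π, pd1 f (b, y) = f (π, y) - f (-π, y) := by
  have hle : (-π : ℝ) ≤ π := by linarith [pi_pos]
  rw [MeasureTheory.integral_Icc_eq_integral_Ioc, ← intervalIntegral.integral_of_le hle]
  have hInt : IntervalIntegrable (fun b => pd1 f (b, y)) volume (-π) π :=
    ((continuous_pd1 hf).comp (continuous_id.prodMk continuous_const)).intervalIntegrable _ _
  exact intervalIntegral.integral_eq_sub_of_hasDerivAt (f := fun b => f (b, y))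
    (fun b _ => hasDerivAt_pd1 hf (b, y)) hInt

lemma integral_pd2_slice {f : Pt → ℝ} (hf : ContDiff ℝ (⊤ : ℕ∞) f) (a : ℝ) :
    ∫ b in Set.Icc (-π) π, pd2 f (a, b) = f (a, π) - f (a, -π) := by
  have hle : (-π : ℝ) ≤ π := by linarith [pi_pos]
  rw [MeasureTheory.integral_Icc_eq_integral_Ioc, ← intervalIntegral.integral_of_le hle]
  have hInt : IntervalIntegrable (fun b => pd2 f (a, b)) volume (-π) π :=
    ((continuous_pd2 hf).comp (continuous_const.prodMk continuous_id)).intervalIntegrable _ _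
  exact intervalIntegral.integral_eq_sub_of_hasDerivAt (f := fun b => f (a, b))
    (fun b _ => hasDerivAt_pd2 hf (a, b)) hInt

lemma isCompact_QS : IsCompact QS := isCompact_Icc.prod isCompact_Icc

lemma integrableOn_QS {F : Pt → ℝ} (hF : Continuous F) : IntegrableOn F QS :=
  hF.continuousOn.integrableOn_compact isCompact_QS

lemma setIntegral_QS_pd1_eq_zero {f : Pt → ℝ} (hf : ContDiff ℝ (⊤ : ℕ∞) f) (hper : Per1 f) :
    ∫ x in QS, pd1 f x = 0 := by
  have hInt : IntegrableOn (pd1 f) QS := integrableOn_QS (continuous_pd1 hf)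
  have hInt' : Integrable (pd1 f)
      ((volume.restrict (Set.Icc (-π) π)).prod (volume.restrict (Set.Icc (-π) π))) := by
    rw [Measure.prod_restrict, ← Measure.volume_eq_prod]; exact hInt
  have key : ∫ x in QS, pd1 f x
      = ∫ y in Set.Icc (-π) π, ∫ x in Set.Icc (-π) π, pd1 f (x, y) := by
    rw [show (∫ x in QS, pd1 f x) = ∫ z, pd1 f z
        ∂((volume.restrict (Set.Icc (-π) π)).prod (volume.restrict (Set.Icc (-π) π))) by
      rw [Measure.prod_restrict, ← Measure.volume_eq_prod]; rfl]
    exact MeasureTheory.integral_prod_symm _ hInt'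
  rw [key]
  have hz : ∀ y : ℝ, (∫ x in Set.Icc (-π) π, pd1 f (x, y)) = 0 := by
    intro y
    rw [integral_pd1_slice hf y]
    have h2 : f (-π + 2 * π, y) = f (-π, y) := by simpa using hper (-π, y)
    have hpi : (π : ℝ) = -π + 2 * π := by ring
    rw [sub_eq_zero]
    nth_rewrite 1 [hpi]
    exact h2
  simp [hz]

lemma setIntegral_QS_pd2_eq_zero {f : Pt → ℝ} (hf : ContDiff ℝ (⊤ : ℕ∞) f)
    (htop : ∀ a : ℝ, f (a, π) = 0) (hbot : ∀ a : ℝ, f (a, -π) = 0) :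
    ∫ x in QS, pd2 f x = 0 := by
  have hInt : IntegrableOn (pd2 f) QS := integrableOn_QS (continuous_pd2 hf)
  have hInt' : IntegrableOn (pd2 f) (Set.Icc (-π) π ×ˢ Set.Icc (-π) π)
      (volume.prod volume) := by
    rw [← Measure.volume_eq_prod]; exact hInt
  have key : ∫ x in QS, pd2 f x
      = ∫ a in Set.Icc (-π) π, ∫ b in Set.Icc (-π) π, pd2 f (a, b) := by
    rw [show (∫ x in QS, pd2 f x) = ∫ z in (Set.Icc (-π) π ×ˢ Set.Icc (-π) π), pd2 f z
        ∂(volume.prod volume) by rw [← Measure.volume_eq_prod]; rfl]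
    exact MeasureTheory.setIntegral_prod _ hInt'
  rw [key]
  have hz : ∀ a : ℝ, (∫ b in Set.Icc (-π) π, pd2 f (a, b)) = 0 := by
    intro a
    rw [integral_pd2_slice hf a, htop a, hbot a, sub_zero]
  simp [hz]

lemma eq_zero_of_setIntegral_zero {F : Pt → ℝ} (hF : Continuous F) (h0 : ∀ x, 0 ≤ F x)
    (hI : ∫ x in QS, F x = 0) : ∀ x ∈ QS, F x = 0 := by
  set U : Set Pt := Set.Ioo (-π) π ×ˢ Set.Ioo (-π) π with hU
  have hUopen : IsOpen U := isOpen_Ioo.prod isOpen_Ioo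
  have hsub : U ⊆ QS := Set.prod_mono Set.Ioo_subset_Icc_self Set.Ioo_subset_Icc_self
  have hInt : IntegrableOn F QS := integrableOn_QS hF
  have hae : F =ᵐ[volume.restrict QS] 0 :=
    (integral_eq_zero_iff_of_nonneg (fun x => h0 x) hInt).mp hI
  have hmeasQS : MeasurableSet QS := (measurableSet_Icc.prod measurableSet_Icc)
  have hnull : volume ({x | F x ≠ 0} ∩ QS) = 0 := by
    have hm : MeasurableSet {x | F x ≠ 0} :=
      (isOpen_ne_fun hF continuous_const).measurableSet
    have := Filter.eventuallyEq_iff_exists_mem.mp hae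
    have h' : volume.restrict QS {x | F x ≠ 0} = 0 := by
      have : ∀ᵐ x ∂(volume.restrict QS), F x = 0 := hae
      simpa [ae_iff] using this
    rwa [Measure.restrict_apply hm] at h'
  have hzeroU : ∀ x ∈ U, F x = 0 := by
    intro x hx
    by_contra hne
    set V : Set Pt := {y | F y ≠ 0} ∩ U with hV
    have hVopen : IsOpen V := (isOpen_ne_fun hF continuous_const).inter hUopen
    have hVne : V.Nonempty := ⟨x, hne, hx⟩
    have hpos : 0 < volume V := hVopen.measure_pos volume hVne
    have : volume V = 0 :=
      measure_mono_null (Set.inter_subset_inter_right _ hsub) hnull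
    exact absurd this hpos.ne'
  intro x hx
  have hclosure : closure U = QS := by
    rw [hU, closure_prod_eq, closure_Ioo (by linarith [pi_pos] : (-π : ℝ) ≠ π)]
    rfl
  have := (Set.EqOn.closure (fun y hy => hzeroU y hy) hF continuous_const)
  rw [hclosure] at this
  exact this hx

end IPMAux

/-- Every smooth stationary solution of the IPM system on the strip
`S = T × [-π,π]` has vanishing velocity and horizontally stratified density: if smooth
`2π`-periodic-in-`x₁` functions `u, p, ρ` satisfy `∇·u = 0`, Darcy's law `u + ∇p = -(0,ρ)`, the
no-flow condition `u₂(x₁, ±π) = 0`, and the stationarity condition `u·∇ρ = 0` on `S`, then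
`u ≡ 0` and `∂_{x₁}ρ ≡ 0` on `S`, i.e. `ρ = g(x₂)` for some `g`. -/
theorem ipm_strip_stationary_classification
    (u : Pt → Pt) (p ρ : Pt → ℝ)
    (hu : ContDiff ℝ (⊤ : ℕ∞) u) (hp : ContDiff ℝ (⊤ : ℕ∞) p) (hρ : ContDiff ℝ (⊤ : ℕ∞) ρ)
    (hper_u1 : Per1 fun x => (u x).1) (hper_u2 : Per1 fun x => (u x).2)
    (hper_p : Per1 p) (hper_ρ : Per1 ρ)
    (hdiv : ∀ x : Pt, x.2 ∈ Set.Icc (-π) π →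
      pd1 (fun y => (u y).1) x + pd2 (fun y => (u y).2) x = 0)
    (hdarcy1 : ∀ x : Pt, x.2 ∈ Set.Icc (-π) π → (u x).1 + pd1 p x = 0)
    (hdarcy2 : ∀ x : Pt, x.2 ∈ Set.Icc (-π) π → (u x).2 + pd2 p x = -ρ x)
    (hnoflow_top : ∀ x₁ : ℝ, (u (x₁, π)).2 = 0)
    (hnoflow_bot : ∀ x₁ : ℝ, (u (x₁, -π)).2 = 0)
    (hstat : ∀ x : Pt, x.2 ∈ Set.Icc (-π) π →
      (u x).1 * pd1 ρ x + (u x).2 * pd2 ρ x = 0) :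
    (∀ x : Pt, x.2 ∈ Set.Icc (-π) π → u x = 0 ∧ pd1 ρ x = 0)
    ∧ ∃ g : ℝ → ℝ, ∀ x : Pt, x.2 ∈ Set.Icc (-π) π → ρ x = g x.2 := by
  have hπ : (0:ℝ) < π := pi_pos
  have hu1 : ContDiff ℝ (⊤ : ℕ∞) (fun x : Pt => (u x).1) := contDiff_fst.comp hu
  have hu2 : ContDiff ℝ (⊤ : ℕ∞) (fun x : Pt => (u x).2) := contDiff_snd.comp hu
  set G₁ : Pt → ℝ := fun x => p x * (u x).1 + ρ x * x.2 * (u x).1 with hG1def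
  set G₂ : Pt → ℝ := fun x => p x * (u x).2 + ρ x * x.2 * (u x).2 with hG2def
  have hG1 : ContDiff ℝ (⊤ : ℕ∞) G₁ := (hp.mul hu1).add ((hρ.mul contDiff_snd).mul hu1)
  have hG2 : ContDiff ℝ (⊤ : ℕ∞) G₂ := (hp.mul hu2).add ((hρ.mul contDiff_snd).mul hu2)
  -- pointwise divergence identity
  have hdivG : ∀ x : Pt, x.2 ∈ Set.Icc (-π) π →
      pd1 G₁ x + pd2 G₂ x = -((u x).1 ^ 2 + (u x).2 ^ 2) := by
    rintro ⟨a, b⟩ hb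
    have hp1 := hasDerivAt_pd1 hp (a, b)
    have hu11 := hasDerivAt_pd1 hu1 (a, b)
    have hρ1 := hasDerivAt_pd1 hρ (a, b)
    have hp2 := hasDerivAt_pd2 hp (a, b)
    have hu22 := hasDerivAt_pd2 hu2 (a, b)
    have hρ2 := hasDerivAt_pd2 hρ (a, b)
    have hD1 : pd1 G₁ (a, b) =
        pd1 p (a, b) * (u (a, b)).1 + p (a, b) * pd1 (fun y => (u y).1) (a, b)
        + (pd1 ρ (a, b) * b * (u (a, b)).1 + ρ (a, b) * b * pd1 (fun y => (u y).1) (a, b)) := by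
      have h := (hp1.mul hu11).add ((hρ1.mul_const b).mul hu11)
      have h' : HasDerivAt (fun y => G₁ (y, b))
          (pd1 p (a, b) * (u (a, b)).1 + p (a, b) * pd1 (fun y => (u y).1) (a, b)
          + (pd1 ρ (a, b) * b * (u (a, b)).1
            + ρ (a, b) * b * pd1 (fun y => (u y).1) (a, b))) a := by
        convert h using 1 <;> rfl
      exact h'.deriv
    have hD2 : pd2 G₂ (a, b) =
        pd2 p (a, b) * (u (a, b)).2 + p (a, b) * pd2 (fun y => (u y).2) (a, b)
        + ((pd2 ρ (a, b) * b + ρ (a, b) * 1) * (u (a, b)).2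
          + ρ (a, b) * b * pd2 (fun y => (u y).2) (a, b)) := by
      have h := (hp2.mul hu22).add ((hρ2.mul (hasDerivAt_id b)).mul hu22)
      have h' : HasDerivAt (fun y => G₂ (a, y))
          (pd2 p (a, b) * (u (a, b)).2 + p (a, b) * pd2 (fun y => (u y).2) (a, b)
          + ((pd2 ρ (a, b) * b + ρ (a, b) * 1) * (u (a, b)).2
            + ρ (a, b) * b * pd2 (fun y => (u y).2) (a, b))) b := by
        convert h using 1 <;> rfl
      exact h'.deriv
    have e1 := hdiv (a, b) hb
    have e2 := hdarcy1 (a, b) hb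
    have e3 := hdarcy2 (a, b) hb
    have e4 := hstat (a, b) hb
    rw [hD1, hD2]
    linear_combination (p (a, b) + ρ (a, b) * b) * e1 + b * e4
      + (u (a, b)).1 * e2 + (u (a, b)).2 * e3
  -- periodicity of G₁
  have hperG1 : Per1 G₁ := by
    intro x
    have h1 : (u (x.1 + 2 * π, x.2)).1 = (u x).1 := hper_u1 x
    have h2 : p (x.1 + 2 * π, x.2) = p x := hper_p x
    have h3 : ρ (x.1 + 2 * π, x.2) = ρ x := hper_ρ x
    simp only [hG1def, h1, h2, h3]
  -- boundary vanishing of G₂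
  have htopG2 : ∀ a : ℝ, G₂ (a, π) = 0 := by
    intro a; simp only [hG2def]; rw [hnoflow_top a]; ring
  have hbotG2 : ∀ a : ℝ, G₂ (a, -π) = 0 := by
    intro a; simp only [hG2def]; rw [hnoflow_bot a]; ring
  -- integral of |u|^2 over QS vanishes
  have hI1 : ∫ x in QS, pd1 G₁ x = 0 := setIntegral_QS_pd1_eq_zero hG1 hperG1
  have hI2 : ∫ x in QS, pd2 G₂ x = 0 := setIntegral_QS_pd2_eq_zero hG2 htopG2 hbotG2
  have hmeasQS : MeasurableSet QS := measurableSet_Icc.prod measurableSet_Icc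
  have hIF : ∫ x in QS, ((u x).1 ^ 2 + (u x).2 ^ 2) = 0 := by
    have hcongr : ∫ x in QS, ((u x).1 ^ 2 + (u x).2 ^ 2)
        = ∫ x in QS, (-(pd1 G₁ x + pd2 G₂ x)) := by
      refine setIntegral_congr_fun hmeasQS fun x hx => ?_
      have := hdivG x hx.2
      linarith
    rw [hcongr, MeasureTheory.integral_neg]
    have hadd : ∫ x in QS, (pd1 G₁ x + pd2 G₂ x)
        = (∫ x in QS, pd1 G₁ x) + ∫ x in QS, pd2 G₂ x :=
      MeasureTheory.integral_add (integrableOn_QS (continuous_pd1 hG1))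
        (integrableOn_QS (continuous_pd2 hG2))
    rw [hadd, hI1, hI2]; ring
  have hF0 : ∀ x ∈ QS, (u x).1 ^ 2 + (u x).2 ^ 2 = 0 := by
    refine eq_zero_of_setIntegral_zero ?_ (fun x => by positivity) hIF
    exact ((continuous_fst.comp hu.continuous).pow 2).add
      ((continuous_snd.comp hu.continuous).pow 2)
  -- u vanishes on the whole strip
  have huzero : ∀ x : Pt, x.2 ∈ Set.Icc (-π) π → u x = 0 := by
    intro x hx
    set n : ℤ := ⌊(x.1 + π) / (2 * π)⌋ with hn
    have h2pi : (0:ℝ) < 2 * π := by linarith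
    have ha : (n:ℝ) ≤ (x.1 + π) / (2 * π) := Int.floor_le _
    have hb : (x.1 + π) / (2 * π) < n + 1 := Int.lt_floor_add_one _
    have ha' : (n:ℝ) * (2 * π) ≤ x.1 + π := (le_div_iff₀ h2pi).mp ha
    have hb' : x.1 + π < ((n:ℝ) + 1) * (2 * π) := (div_lt_iff₀ h2pi).mp hb
    have hmem : ((x.1 - n * (2 * π), x.2) : Pt) ∈ QS :=
      ⟨⟨by simp only; linarith, by simp only; nlinarith⟩, hx⟩
    have h0 := hF0 _ hmem
    have e1 : (u (x.1 - n * (2 * π), x.2)).1 = (u x).1 := Per1.shift_int hper_u1 x n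
    have e2 : (u (x.1 - n * (2 * π), x.2)).2 = (u x).2 := Per1.shift_int hper_u2 x n
    rw [e1, e2] at h0
    have hz1 : (u x).1 = 0 := by nlinarith [sq_nonneg (u x).1, sq_nonneg (u x).2]
    have hz2 : (u x).2 = 0 := by nlinarith [sq_nonneg (u x).1, sq_nonneg (u x).2]
    exact Prod.ext hz1 hz2
  -- pressure is constant horizontally
  have hpd1p : ∀ x : Pt, x.2 ∈ Set.Icc (-π) π → pd1 p x = 0 := by
    intro x hx
    have h1 := hdarcy1 x hx
    rw [huzero x hx] at h1
    simpa using h1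
  have hpconst : ∀ b ∈ Set.Icc (-π) π, ∀ a : ℝ, p (a, b) = p (0, b) := by
    intro b hb a
    have hdiffp : Differentiable ℝ (fun y : ℝ => p (y, b)) := fun y =>
      ((hp.differentiable (by simp)) _).comp y
        (DifferentiableAt.prodMk differentiableAt_id (differentiableAt_const _))
    exact is_const_of_deriv_eq_zero hdiffp (fun y => hpd1p (y, b) hb) a 0
  -- density is horizontally constant in the open strip
  have hrho_int : ∀ b ∈ Set.Ioo (-π) π, ∀ a : ℝ, ρ (a, b) = ρ (0, b) := by
    intro b hb a
    have hbIcc : b ∈ Set.Icc (-π) π := Set.Ioo_subset_Icc_self hb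
    have h1 := hdarcy2 (a, b) hbIcc
    have h2 := hdarcy2 ((0:ℝ), b) hbIcc
    rw [huzero (a, b) hbIcc] at h1
    rw [huzero ((0:ℝ), b) hbIcc] at h2
    have hev : (fun y => p (a, y)) =ᶠ[nhds b] (fun y => p (0, y)) := by
      filter_upwards [Ioo_mem_nhds hb.1 hb.2] with y hy
      exact hpconst y (Set.Ioo_subset_Icc_self hy) a
    have hdeq : pd2 p (a, b) = pd2 p ((0:ℝ), b) := hev.deriv_eq
    simp only [Prod.snd_zero] at h1 h2
    have h1' : pd2 p (a, b) = -ρ (a, b) := by linarith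
    have h2' : pd2 p ((0:ℝ), b) = -ρ ((0:ℝ), b) := by linarith
    have := h1'.symm.trans (hdeq.trans h2')
    linarith
  -- extend to the closed strip by continuity
  have hrho : ∀ b ∈ Set.Icc (-π) π, ∀ a : ℝ, ρ (a, b) = ρ (0, b) := by
    intro b hb a
    have hc1 : Continuous (fun y : ℝ => ρ (a, y)) :=
      hρ.continuous.comp (continuous_const.prodMk continuous_id)
    have hc2 : Continuous (fun y : ℝ => ρ ((0:ℝ), y)) :=
      hρ.continuous.comp (continuous_const.prodMk continuous_id)
    have heq : Set.EqOn (fun y : ℝ => ρ (a, y)) (fun y : ℝ => ρ ((0:ℝ), y))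
        (closure (Set.Ioo (-π) π)) :=
      Set.EqOn.closure (fun y hy => hrho_int y hy a) hc1 hc2
    rw [closure_Ioo (by linarith : (-π:ℝ) ≠ π)] at heq
    exact heq hb
  have hpd1ρ : ∀ x : Pt, x.2 ∈ Set.Icc (-π) π → pd1 ρ x = 0 := by
    intro x hx
    have hfun : (fun y : ℝ => ρ (y, x.2)) = fun _ => ρ ((0:ℝ), x.2) :=
      funext fun y => hrho x.2 hx y
    show deriv (fun y => ρ (y, x.2)) x.1 = 0
    rw [hfun]
    exact deriv_const _ _
  exact ⟨fun x hx => ⟨huzero x hx, hpd1ρ x hx⟩,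
    ⟨fun y => ρ ((0:ℝ), y), fun x hx => hrho x.2 hx x.1⟩⟩
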